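/- Let V be a word consisting of r North steps and l South steps, and let H be a word consisting of r East steps and l West steps (i.e., the number of North steps equals the number of East steps and the number of South steps equals the number of West steps). Then the number of shuffles of V and H with even peak-count minus the number with odd peak-count equals the super Catalan number S(r, l) = (2r)!·(2l)! / (r!·l!·(r+l)!). -/

import Mathlib

inductive Step : Type
  | E | W | N | S
deriving DecidableEq, Repr

open Step

/-- A step is vertical (North or South). -/
def isVert : Step → Bool
  | N => true
  | S => true
  | _ => false

/-- A step is horizontal (East or West). -/
def isHoriz : Step → Bool
  | E => true
  | W => true
  | _ => false

/-- `σ` is a shuffle (interleaving) of the vertical path `V` and horizontal path `H`: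
its subsequence of vertical steps is `V` and its subsequence of horizontal steps is `H`. -/
def IsShuffle (V H σ : List Step) : Prop :=
  σ.filter isVert = V ∧ σ.filter isHoriz = H

/-- The list of adjacent pairs `(σ_i, σ_{i+1})` of a list. -/
def pairs (σ : List Step) : List (Step × Step) := σ.zip σ.tail

/-- Signed peak-count: (# of (N,W) adjacent pairs) − (# of (E,S) adjacent pairs). -/
def signedPeak (σ : List Step) : ℤ :=
  (((pairs σ).filter (fun p => decide (p.1 = N ∧ p.2 = W))).length : ℤ)
  - (((pairs σ).filter (fun p => decide (p.1 = E ∧ p.2 = S))).length : ℤ)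

/-- Peak-count: (# of (N,W) adjacent pairs) + (# of (E,S) adjacent pairs). -/
def peakCount (σ : List Step) : ℕ :=
  ((pairs σ).filter (fun p => decide (p.1 = N ∧ p.2 = W))).length
  + ((pairs σ).filter (fun p => decide (p.1 = E ∧ p.2 = S))).length

/-- Binomial coefficient with integer arguments, equal to 0 unless `0 ≤ b ≤ a`. -/
def zch (a b : ℤ) : ℕ := if 0 ≤ b ∧ b ≤ a then a.toNat.choose b.toNat else 0





open Finset

/-- Integer-indexed binomial coefficient. -/
def ch (n : ℕ) (k : ℤ) : ℤ := if 0 ≤ k then (n.choose k.toNat : ℤ) else 0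

lemma ch_neg {n : ℕ} {k : ℤ} (h : k < 0) : ch n k = 0 := if_neg (by omega)

lemma ch_gt {n : ℕ} {k : ℤ} (h : (n : ℤ) < k) : ch n k = 0 := by
  have h0 : (0:ℤ) ≤ k := by omega
  have h1 : n < k.toNat := by omega
  simp [ch, if_pos h0, Nat.choose_eq_zero_of_lt h1]

lemma ch_pascal (n : ℕ) (k : ℤ) : ch (n + 1) k = ch n k + ch n (k - 1) := by
  rcases lt_trichotomy k 0 with h | h | h
  · rw [ch_neg h, ch_neg h, ch_neg (by omega)]; ring
  · subst h; simp [ch]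
  · have h0 : (0:ℤ) ≤ k := le_of_lt h
    have h1 : (0:ℤ) ≤ k - 1 := by omega
    have ht : k.toNat = (k - 1).toNat + 1 := by omega
    simp only [ch, if_pos h0, if_pos h1, ht]
    rw [Nat.choose_succ_succ]
    push_cast; ring

/-- ch n 0 = 1 -/
lemma ch_zero (n : ℕ) : ch n 0 = 1 := by simp [ch]

lemma ch_zero_fun (k : ℤ) : ch 0 k = if k = 0 then 1 else 0 := by
  rcases lt_trichotomy k 0 with h | h | h
  · rw [ch_neg h, if_neg (by omega)]
  · subst h; simp [ch]
  · rw [ch_gt (by exact_mod_cast h), if_neg (by omega)]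

/-- (-1)^k for integer k. -/
def sg (k : ℤ) : ℤ := if Even k then 1 else -1

lemma sg_add_one (k : ℤ) : sg (k + 1) = - sg k := by
  by_cases h : Even k <;> simp [sg, Int.even_add_one, h]

lemma sg_sub_one (k : ℤ) : sg (k - 1) = - sg k := by
  have := sg_add_one (k - 1)
  rw [show k - 1 + 1 = k by ring] at this
  linarith

lemma sg_zero : sg 0 = 1 := by simp [sg]

/-- Shift a sum over a symmetric interval up by one. -/
lemma sum_Icc_shift_up (F : ℤ → ℤ) (M : ℤ) (hM : 0 ≤ M) (h1 : F (-M) = 0)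
    (h2 : F (M + 1) = 0) :
    ∑ k ∈ Icc (-M) M, F (k + 1) = ∑ k ∈ Icc (-M) M, F k := by
  have e1 : ∑ k ∈ Icc (-M) M, F (k + 1) = ∑ k ∈ Icc (-M + 1) (M + 1), F k := by
    rw [show Icc (-M + 1) (M + 1) = (Icc (-M) M).map (addRightEmbedding 1) by
      rw [map_add_right_Icc], Finset.sum_map]
    rfl
  have i1 : Icc (-M + 1) (M + 1) = insert (M + 1) (Icc (-M + 1) M) := by
    ext x; simp only [mem_Icc, mem_insert]; omega
  have i2 : Icc (-M) M = insert (-M) (Icc (-M + 1) M) := by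
    ext x; simp only [mem_Icc, mem_insert]; omega
  rw [e1, i1, Finset.sum_insert (by simp only [mem_Icc]; omega), h2, i2,
    Finset.sum_insert (by simp only [mem_Icc]; omega), h1]

/-- Shift a sum over a symmetric interval down by one. -/
lemma sum_Icc_shift_down (F : ℤ → ℤ) (M : ℤ) (hM : 0 ≤ M) (h1 : F (-M - 1) = 0)
    (h2 : F M = 0) :
    ∑ k ∈ Icc (-M) M, F (k - 1) = ∑ k ∈ Icc (-M) M, F k := by
  have e1 : ∑ k ∈ Icc (-M) M, F (k - 1) = ∑ k ∈ Icc (-M - 1) (M - 1), F k := by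
    rw [show Icc (-M - 1) (M - 1) = (Icc (-M) M).map (addRightEmbedding (-1)) by
      rw [map_add_right_Icc, show -M + -1 = -M - 1 by ring, show M + -1 = M - 1 by ring],
      Finset.sum_map]
    rfl
  have i1 : Icc (-M - 1) (M - 1) = insert (-M - 1) (Icc (-M) (M - 1)) := by
    ext x; simp only [mem_Icc, mem_insert]; omega
  have i2 : Icc (-M) M = insert M (Icc (-M) (M - 1)) := by
    ext x; simp only [mem_Icc, mem_insert]; omega
  rw [e1, i1, Finset.sum_insert (by simp only [mem_Icc]; omega), h1, i2,
    Finset.sum_insert (by simp only [mem_Icc]; omega), h2]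
lemma ch_self (n : ℕ) : ch n ((n : ℤ)) = 1 := by simp [ch]

/-- The master sum. -/
noncomputable def gs (M : ℤ) (a b c d : ℕ) : ℤ :=
  ∑ k ∈ Icc (-M) M, sg k * ch (a + c) ((a : ℤ) + k) * ch (b + d) ((d : ℤ) + k)

lemma gs_congr_mono (a b c d : ℕ) {M M' : ℤ} (hMM : M ≤ M')
    (hM1 : (a : ℤ) ≤ M) (hM2 : (c : ℤ) ≤ M) :
    gs M a b c d = gs M' a b c d := by
  unfold gs
  refine Finset.sum_subset (Finset.Icc_subset_Icc (by omega) hMM) ?_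
  intro k hk hk'
  simp only [mem_Icc, not_and_or, not_le] at hk hk'
  rcases hk' with h | h
  · rw [ch_neg (show (a:ℤ) + k < 0 by omega)]; ring
  · rw [ch_gt (show ((a + c : ℕ) : ℤ) < (a:ℤ) + k by push_cast; omega)]; ring

lemma gs_congr (a b c d : ℕ) {M M' : ℤ}
    (hM1 : (a : ℤ) ≤ M) (hM2 : (c : ℤ) ≤ M)
    (hM1' : (a : ℤ) ≤ M') (hM2' : (c : ℤ) ≤ M') :
    gs M a b c d = gs M' a b c d := by
  rcases le_total M M' with h | h
  · exact gs_congr_mono a b c d h hM1 hM2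
  · exact (gs_congr_mono a b c d h hM1' hM2').symm

/-- The signed shuffle number. -/
noncomputable def g (a b c d : ℕ) : ℤ := gs ((a : ℤ) + c) a b c d

lemma g_eq_gs (a b c d : ℕ) {M : ℤ} (hM1 : (a : ℤ) ≤ M) (hM2 : (c : ℤ) ≤ M) :
    g a b c d = gs M a b c d :=
  gs_congr a b c d (by omega) (by omega) hM1 hM2

lemma sum_sg_pair_up (Q : ℤ → ℤ) (M : ℤ) (hM : 0 ≤ M) (h1 : Q (-M) = 0)
    (h2 : Q (M + 1) = 0) :
    ∑ k ∈ Icc (-M) M, (sg k * Q (k + 1) + sg k * Q k) = 0 := by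
  have hs := sum_Icc_shift_up (fun j => sg j * Q j) M hM
    (by simp only [h1, mul_zero]) (by simp only [h2, mul_zero])
  have h2' : ∑ k ∈ Icc (-M) M, sg k * Q (k + 1)
      = - ∑ k ∈ Icc (-M) M, (fun j => sg j * Q j) (k + 1) := by
    rw [← Finset.sum_neg_distrib]
    exact Finset.sum_congr rfl fun k _ => by simp only []; rw [sg_add_one]; ring
  rw [Finset.sum_add_distrib, h2', hs]
  ring

lemma sum_sg_pair_down (Q : ℤ → ℤ) (M : ℤ) (hM : 0 ≤ M) (h1 : Q (-M - 1) = 0)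
    (h2 : Q M = 0) :
    ∑ k ∈ Icc (-M) M, (sg k * Q (k - 1) + sg k * Q k) = 0 := by
  have hs := sum_Icc_shift_down (fun j => sg j * Q j) M hM
    (by simp only [h1, mul_zero]) (by simp only [h2, mul_zero])
  have h2' : ∑ k ∈ Icc (-M) M, sg k * Q (k - 1)
      = - ∑ k ∈ Icc (-M) M, (fun j => sg j * Q j) (k - 1) := by
    rw [← Finset.sum_neg_distrib]
    exact Finset.sum_congr rfl fun k _ => by simp only []; rw [sg_sub_one]; ring
  rw [Finset.sum_add_distrib, h2', hs]
  ring

lemma g1 (a b c d : ℕ) :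
    g (a + 1) b (c + 1) d = g a b (c + 1) d + g (a + 1) b c d := by
  set M : ℤ := (a : ℤ) + c + 2 with hMdef
  rw [g_eq_gs (a+1) b (c+1) d (M := M) (by push_cast; omega) (by push_cast; omega),
    g_eq_gs a b (c+1) d (M := M) (by push_cast; omega) (by push_cast; omega),
    g_eq_gs (a+1) b c d (M := M) (by push_cast; omega) (by push_cast; omega)]
  unfold gs
  rw [← Finset.sum_add_distrib]
  refine Finset.sum_congr rfl fun k _ => ?_
  have e1 : (a + 1) + (c + 1) = (a + (c + 1)) + 1 := by omega
  have e2 : (a + 1) + c = a + (c + 1) := by omega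
  rw [e1, e2, ch_pascal]
  push_cast
  rw [show (a : ℤ) + 1 + k - 1 = (a : ℤ) + k by ring]
  ring

lemma g4 (a b c d : ℕ) :
    g a (b + 1) c (d + 1) = g a b c (d + 1) + g a (b + 1) c d := by
  set M : ℤ := (a : ℤ) + c + 2 with hMdef
  rw [g_eq_gs a (b+1) c (d+1) (M := M) (by push_cast; omega) (by push_cast; omega),
    g_eq_gs a b c (d+1) (M := M) (by push_cast; omega) (by push_cast; omega),
    g_eq_gs a (b+1) c d (M := M) (by push_cast; omega) (by push_cast; omega)]
  unfold gs
  rw [← Finset.sum_add_distrib]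
  refine Finset.sum_congr rfl fun k _ => ?_
  have e1 : (b + 1) + (d + 1) = (b + (d + 1)) + 1 := by omega
  have e2 : (b + 1) + d = b + (d + 1) := by omega
  rw [e1, e2, ch_pascal]
  push_cast
  rw [show (d : ℤ) + 1 + k - 1 = (d : ℤ) + k by ring]
  ring
lemma g2 (a b c d : ℕ) :
    g (a + 1) b c (d + 1) = g a b c (d + 1) + g (a + 1) b c d - 2 * g a b c d := by
  set M : ℤ := (a : ℤ) + c + 2 with hM
  have hM0 : (0 : ℤ) ≤ M := by positivity
  have hpair := sum_sg_pair_up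
    (fun j => ch (a + c) ((a : ℤ) + j) * ch (b + d) ((d : ℤ) + j)) M hM0
    (by rw [ch_neg (by omega)]; ring)
    (by rw [ch_gt (by push_cast; omega)]; ring)
  have main : gs M (a+1) b c (d+1) + 2 * gs M a b c d - gs M a b c (d+1)
      - gs M (a+1) b c d = 0 := by
    unfold gs
    rw [Finset.mul_sum, ← Finset.sum_add_distrib, ← Finset.sum_sub_distrib,
      ← Finset.sum_sub_distrib, ← hpair]
    refine Finset.sum_congr rfl fun k hk => ?_
    have e1 : (a + 1) + c = (a + c) + 1 := by omega
    have e2 : b + (d + 1) = (b + d) + 1 := by omega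
    rw [e1, e2, ch_pascal, ch_pascal]
    push_cast
    rw [show (a:ℤ) + 1 + k - 1 = (a:ℤ) + k by ring,
      show (d:ℤ) + 1 + k - 1 = (d:ℤ) + k by ring,
      show (a:ℤ) + (k + 1) = (a:ℤ) + 1 + k by ring,
      show (d:ℤ) + (k + 1) = (d:ℤ) + 1 + k by ring]
    ring
  rw [g_eq_gs (a+1) b c (d+1) (M := M) (by push_cast; omega) (by push_cast; omega),
    g_eq_gs a b c (d+1) (M := M) (by push_cast; omega) (by push_cast; omega),
    g_eq_gs (a+1) b c d (M := M) (by push_cast; omega) (by push_cast; omega),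
    g_eq_gs a b c d (M := M) (by push_cast; omega) (by push_cast; omega)]
  linarith [main]

lemma g3 (a b c d : ℕ) :
    g a (b + 1) (c + 1) d = g a b (c + 1) d + g a (b + 1) c d - 2 * g a b c d := by
  set M : ℤ := (a : ℤ) + c + 2 with hM
  have hM0 : (0 : ℤ) ≤ M := by positivity
  have hpair := sum_sg_pair_down
    (fun j => ch (a + c) ((a : ℤ) + j) * ch (b + d) ((d : ℤ) + j)) M hM0
    (by rw [ch_neg (by omega)]; ring)
    (by rw [ch_gt (by push_cast; omega)]; ring)
  have main : gs M a (b+1) (c+1) d + 2 * gs M a b c d - gs M a b (c+1) d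
      - gs M a (b+1) c d = 0 := by
    unfold gs
    rw [Finset.mul_sum, ← Finset.sum_add_distrib, ← Finset.sum_sub_distrib,
      ← Finset.sum_sub_distrib, ← hpair]
    refine Finset.sum_congr rfl fun k hk => ?_
    have e1 : a + (c + 1) = (a + c) + 1 := by omega
    have e2 : (b + 1) + d = (b + d) + 1 := by omega
    rw [e1, e2, ch_pascal, ch_pascal]
    push_cast
    rw [show (a:ℤ) + (k - 1) = (a:ℤ) + k - 1 by ring,
      show (d:ℤ) + (k - 1) = (d:ℤ) + k - 1 by ring]
    ring
  rw [g_eq_gs a (b+1) (c+1) d (M := M) (by push_cast; omega) (by push_cast; omega),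
    g_eq_gs a b (c+1) d (M := M) (by push_cast; omega) (by push_cast; omega),
    g_eq_gs a (b+1) c d (M := M) (by push_cast; omega) (by push_cast; omega),
    g_eq_gs a b c d (M := M) (by push_cast; omega) (by push_cast; omega)]
  linarith [main]

lemma gC (a b c d : ℕ) :
    g a b (c + 1) d + g a b c (d + 1) = 2 * g a b c d := by
  set M : ℤ := (a : ℤ) + c + 2 with hM
  have hM0 : (0 : ℤ) ≤ M := by positivity
  have hpair := sum_sg_pair_up
    (fun j => ch (a + c) ((a : ℤ) - 1 + j) * ch (b + d) ((d : ℤ) + j)) M hM0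
    (by rw [ch_neg (by omega)]; ring)
    (by rw [ch_gt (by push_cast; omega)]; ring)
  have main : gs M a b (c+1) d + gs M a b c (d+1) - 2 * gs M a b c d = 0 := by
    unfold gs
    rw [Finset.mul_sum, ← Finset.sum_add_distrib, ← Finset.sum_sub_distrib, ← hpair]
    refine Finset.sum_congr rfl fun k hk => ?_
    have e1 : a + (c + 1) = (a + c) + 1 := by omega
    have e2 : b + (d + 1) = (b + d) + 1 := by omega
    rw [e1, e2, ch_pascal, ch_pascal]
    push_cast
    rw [show (a:ℤ) + k - 1 = (a:ℤ) - 1 + k by ring,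
      show (a:ℤ) - 1 + (k + 1) = (a:ℤ) + k by ring,
      show (d:ℤ) + (k + 1) = (d:ℤ) + 1 + k by ring,
      show (d:ℤ) + 1 + k - 1 = (d:ℤ) + k by ring]
    ring
  rw [g_eq_gs a b (c+1) d (M := M) (by push_cast; omega) (by push_cast; omega),
    g_eq_gs a b c (d+1) (M := M) (by push_cast; omega) (by push_cast; omega),
    g_eq_gs a b c d (M := M) (by push_cast; omega) (by push_cast; omega)]
  linarith [main]

lemma gR (a b c d : ℕ) :
    g (a + 1) b c d + g a (b + 1) c d = 2 * g a b c d := by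
  set M : ℤ := (a : ℤ) + c + 2 with hM
  have hM0 : (0 : ℤ) ≤ M := by positivity
  have hpair := sum_sg_pair_up
    (fun j => ch (a + c) ((a : ℤ) + j) * ch (b + d) ((d : ℤ) - 1 + j)) M hM0
    (by rw [ch_neg (by omega)]; ring)
    (by rw [ch_gt (by push_cast; omega)]; ring)
  have main : gs M (a+1) b c d + gs M a (b+1) c d - 2 * gs M a b c d = 0 := by
    unfold gs
    rw [Finset.mul_sum, ← Finset.sum_add_distrib, ← Finset.sum_sub_distrib, ← hpair]
    refine Finset.sum_congr rfl fun k hk => ?_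
    have e1 : (a + 1) + c = (a + c) + 1 := by omega
    have e2 : (b + 1) + d = (b + d) + 1 := by omega
    rw [e1, e2, ch_pascal, ch_pascal]
    push_cast
    rw [show (a:ℤ) + 1 + k - 1 = (a:ℤ) + k by ring,
      show (a:ℤ) + (k + 1) = (a:ℤ) + 1 + k by ring,
      show (d:ℤ) - 1 + (k + 1) = (d:ℤ) + k by ring,
      show (d:ℤ) + k - 1 = (d:ℤ) - 1 + k by ring]
    ring
  rw [g_eq_gs (a+1) b c d (M := M) (by push_cast; omega) (by push_cast; omega),
    g_eq_gs a (b+1) c d (M := M) (by push_cast; omega) (by push_cast; omega),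
    g_eq_gs a b c d (M := M) (by push_cast; omega) (by push_cast; omega)]
  linarith [main]

lemma g5 (c d : ℕ) : g 0 0 c d = 1 := by
  unfold g gs
  rw [Finset.sum_eq_single 0]
  · norm_num [sg_zero, ch_zero, ch_self]
  · intro k hk hk0
    rcases lt_or_gt_of_ne hk0 with h | h
    · rw [ch_neg (by push_cast; omega)]; ring
    · rw [ch_gt (show ((0 + d : ℕ) : ℤ) < (d : ℤ) + k by push_cast; omega)]; ring
  · intro h
    exact absurd (Finset.mem_Icc.mpr ⟨by push_cast; omega, by push_cast; omega⟩) h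

lemma g6 (a b : ℕ) : g a b 0 0 = 1 := by
  unfold g gs
  rw [Finset.sum_eq_single 0]
  · norm_num [sg_zero, ch_zero, ch_self]
  · intro k hk hk0
    simp only [Nat.cast_zero, zero_add]
    rcases lt_or_gt_of_ne hk0 with h | h
    · rw [ch_neg (show k < 0 from h)]; ring
    · rw [ch_gt (show ((a + 0 : ℕ) : ℤ) < (a : ℤ) + k by push_cast; omega)]; ring
  · intro h
    exact absurd (Finset.mem_Icc.mpr ⟨by push_cast; omega, by push_cast; omega⟩) h

lemma gT0 (r : ℕ) : g r 0 r 0 = ((2 * r).choose r : ℤ) := by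
  unfold g gs
  rw [Finset.sum_eq_single 0]
  · have : ch (r + r) ((r : ℤ) + 0) = ((r + r).choose r : ℤ) := by
      simp [ch]
    rw [this]
    norm_num [sg_zero, ch_zero]
    norm_num [two_mul]
  · intro k hk hk0
    simp only [Nat.cast_zero, zero_add]
    rcases lt_or_gt_of_ne hk0 with h | h
    · rw [ch_neg (show k < 0 from h)]; ring
    · rw [ch_gt (show ((0 + 0 : ℕ) : ℤ) < k by push_cast; omega)]; ring
  · intro h
    exact absurd (Finset.mem_Icc.mpr ⟨by push_cast; omega, by push_cast; omega⟩) h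

lemma gT (r l : ℕ) :
    g (r + 1) l (r + 1) l + g r (l + 1) r (l + 1) = 4 * g r l r l := by
  have h1 := g1 r l r l
  have h4 := g4 r l r l
  have hc := gC r l r l
  have hr := gR r l r l
  linarith
lemma fact_ne (n : ℕ) : ((n.factorial : ℚ)) ≠ 0 :=
  Nat.cast_ne_zero.mpr n.factorial_ne_zero

lemma g_rat (l : ℕ) : ∀ r : ℕ, ((g r l r l : ℚ)) =
    ((2 * r).factorial * (2 * l).factorial : ℚ)
      / ((r.factorial : ℚ) * (l.factorial : ℚ) * ((r + l).factorial : ℚ)) := by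
  induction l with
  | zero =>
    intro r
    have key : (2 * r).choose r * (r.factorial * r.factorial) = (2 * r).factorial := by
      have h := Nat.choose_mul_factorial_mul_factorial (show r ≤ 2 * r by omega)
      rw [show 2 * r - r = r by omega] at h
      rw [← h]; ring
    rw [gT0]
    rw [eq_div_iff (by
      exact mul_ne_zero (mul_ne_zero (fact_ne r) (fact_ne 0)) (fact_ne (r + 0)))]
    norm_num [Nat.factorial_zero]
    exact_mod_cast key
  | succ l ih =>
    intro r
    have hZ : (g r (l + 1) r (l + 1) : ℤ) = 4 * g r l r l - g (r + 1) l (r + 1) l := by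
      linarith [gT r l]
    have hQ : ((g r (l + 1) r (l + 1) : ℚ))
        = 4 * ((g r l r l : ℚ)) - ((g (r + 1) l (r + 1) l : ℚ)) := by
      exact_mod_cast hZ
    rw [hQ, ih r, ih (r + 1)]
    have e1 : ((2 * (r + 1)).factorial : ℚ) = (2 * r + 2) * (2 * r + 1) * (2 * r).factorial := by
      rw [show 2 * (r + 1) = (2 * r + 1) + 1 by ring, Nat.factorial_succ, Nat.factorial_succ]
      push_cast; ring
    have e2 : ((2 * (l + 1)).factorial : ℚ) = (2 * l + 2) * (2 * l + 1) * (2 * l).factorial := by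
      rw [show 2 * (l + 1) = (2 * l + 1) + 1 by ring, Nat.factorial_succ, Nat.factorial_succ]
      push_cast; ring
    have e3 : ((r + 1).factorial : ℚ) = (r + 1) * r.factorial := by
      rw [Nat.factorial_succ]; push_cast; ring
    have e4 : ((l + 1).factorial : ℚ) = (l + 1) * l.factorial := by
      rw [Nat.factorial_succ]; push_cast; ring
    have e5 : ((r + (l + 1)).factorial : ℚ) = (r + l + 1) * (r + l).factorial := by
      rw [show r + (l + 1) = (r + l) + 1 by ring, Nat.factorial_succ]; push_cast; ring
    have e6 : (((r + 1) + l).factorial : ℚ) = (r + l + 1) * (r + l).factorial := by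
      rw [show (r + 1) + l = (r + l) + 1 by ring, Nat.factorial_succ]; push_cast; ring
    rw [e1, e2, e3, e4, e5, e6]
    have h1 := fact_ne r
    have h2 := fact_ne l
    have h3 := fact_ne (r + l)
    have h4 : ((r : ℚ) + 1) ≠ 0 := by positivity
    have h5 : ((l : ℚ) + 1) ≠ 0 := by positivity
    have h6 : ((r : ℚ) + l + 1) ≠ 0 := by positivity
    field_simp
    ring

/-! ### Shuffles as a list -/

def shuffles : List Step → List Step → List (List Step)
  | [], H => [H]
  | v :: V, [] => [v :: V]
  | v :: V, h :: H =>
      (shuffles V (h :: H)).map (v :: ·) ++ (shuffles (v :: V) H).map (h :: ·)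
  termination_by V H => V.length + H.length
  decreasing_by all_goals simp +arith

lemma shuffles_nil_left (H : List Step) : shuffles [] H = [H] := by simp [shuffles]

lemma shuffles_nil_right (V : List Step) : shuffles V [] = [V] := by
  cases V <;> simp [shuffles]

lemma shuffles_cons_cons (v h : Step) (V H : List Step) :
    shuffles (v :: V) (h :: H)
      = (shuffles V (h :: H)).map (v :: ·) ++ (shuffles (v :: V) H).map (h :: ·) := by
  simp [shuffles]

lemma vert_not_horiz {s : Step} (h : isVert s = true) : isHoriz s = false := by
  cases s <;> simp_all [isVert, isHoriz]

lemma horiz_not_vert {s : Step} (h : isHoriz s = true) : isVert s = false := by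
  cases s <;> simp_all [isVert, isHoriz]

lemma vert_or_horiz (s : Step) : isVert s = true ∨ isHoriz s = true := by
  cases s <;> simp [isVert, isHoriz]

lemma vert_cases {s : Step} (h : isVert s = true) : s = N ∨ s = S := by
  cases s <;> simp_all [isVert]

lemma horiz_cases {s : Step} (h : isHoriz s = true) : s = E ∨ s = W := by
  cases s <;> simp_all [isHoriz]

lemma shuffles_sound : ∀ (n : ℕ) (V H : List Step), V.length + H.length = n →
    (∀ s ∈ V, isVert s = true) → (∀ s ∈ H, isHoriz s = true) →
    ∀ σ ∈ shuffles V H, IsShuffle V H σ := by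
  intro n
  induction n using Nat.strong_induction_on with
  | _ n ih =>
    intro V H hn hV hH σ hσ
    match V, H with
    | [], H =>
      rw [shuffles_nil_left, List.mem_singleton] at hσ
      subst hσ
      exact ⟨List.filter_eq_nil_iff.mpr fun s hs => by
          simp [horiz_not_vert (hH s hs)],
        List.filter_eq_self.mpr hH⟩
    | v :: V, [] =>
      rw [shuffles_nil_right, List.mem_singleton] at hσ
      subst hσ
      exact ⟨List.filter_eq_self.mpr hV,
        List.filter_eq_nil_iff.mpr fun s hs => by
          rw [vert_not_horiz (hV s hs)]; simp⟩
    | v :: V, h :: H =>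
      rw [shuffles_cons_cons, List.mem_append] at hσ
      rcases hσ with hσ | hσ
      · obtain ⟨τ, hτ, rfl⟩ := List.mem_map.mp hσ
        obtain ⟨h1, h2⟩ := ih (V.length + (h :: H).length) (by simp at hn ⊢; omega)
          V (h :: H) rfl (fun s hs => hV s (List.mem_cons_of_mem _ hs)) hH τ hτ
        have hv := hV v (List.mem_cons_self)
        constructor
        · rw [List.filter_cons_of_pos hv, h1]
        · rw [List.filter_cons_of_neg (by rw [vert_not_horiz hv]; simp), h2]
      · obtain ⟨τ, hτ, rfl⟩ := List.mem_map.mp hσ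
        obtain ⟨h1, h2⟩ := ih ((v :: V).length + H.length) (by simp at hn ⊢; omega)
          (v :: V) H rfl hV (fun s hs => hH s (List.mem_cons_of_mem _ hs)) τ hτ
        have hh := hH h (List.mem_cons_self)
        have hh' : isVert h = false := by
          cases h <;> simp_all [isVert, isHoriz]
        constructor
        · rw [List.filter_cons_of_neg (by rw [hh']; simp), h1]
        · rw [List.filter_cons_of_pos hh, h2]

lemma shuffles_complete : ∀ (σ V H : List Step), IsShuffle V H σ → σ ∈ shuffles V H := by
  intro σ
  induction σ with
  | nil =>
    rintro V H ⟨h1, h2⟩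
    simp only [List.filter_nil] at h1 h2
    rw [← h1, ← h2, shuffles_nil_left]
    simp
  | cons x σ ih =>
    rintro V H ⟨h1, h2⟩
    rcases vert_or_horiz x with hx | hx
    · have hx' : isHoriz x = false := vert_not_horiz hx
      rw [List.filter_cons_of_pos hx] at h1
      rw [List.filter_cons_of_neg (by rw [hx']; simp)] at h2
      subst h1 h2
      have hmem := ih (σ.filter isVert) (σ.filter isHoriz) ⟨rfl, rfl⟩
      cases hHH : σ.filter isHoriz with
      | nil =>
        rw [hHH, shuffles_nil_right, List.mem_singleton] at hmem
        rw [shuffles_nil_right, List.mem_singleton]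
        exact congrArg (List.cons x) hmem
      | cons h H₂ =>
        rw [hHH] at hmem
        rw [shuffles_cons_cons, List.mem_append]
        exact Or.inl (List.mem_map.mpr ⟨σ, hmem, rfl⟩)
    · have hx' : isVert x = false := by
        cases x <;> simp_all [isVert, isHoriz]
      rw [List.filter_cons_of_neg (by rw [hx']; simp)] at h1
      rw [List.filter_cons_of_pos hx] at h2
      subst h1 h2
      have hmem := ih (σ.filter isVert) (σ.filter isHoriz) ⟨rfl, rfl⟩
      cases hVV : σ.filter isVert with
      | nil =>
        rw [hVV, shuffles_nil_left, List.mem_singleton] at hmem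
        rw [shuffles_nil_left, List.mem_singleton]
        exact congrArg (List.cons x) hmem
      | cons v V₂ =>
        rw [hVV] at hmem
        rw [shuffles_cons_cons, List.mem_append]
        exact Or.inr (List.mem_map.mpr ⟨σ, hmem, rfl⟩)

lemma mem_shuffles_iff {V H σ : List Step} (hV : ∀ s ∈ V, isVert s = true)
    (hH : ∀ s ∈ H, isHoriz s = true) : σ ∈ shuffles V H ↔ IsShuffle V H σ :=
  ⟨fun h => shuffles_sound (V.length + H.length) V H rfl hV hH σ h,
    fun h => shuffles_complete σ V H h⟩

lemma shuffles_nodup : ∀ (n : ℕ) (V H : List Step), V.length + H.length = n →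
    (∀ s ∈ V, isVert s = true) → (∀ s ∈ H, isHoriz s = true) →
    (shuffles V H).Nodup := by
  intro n
  induction n using Nat.strong_induction_on with
  | _ n ih =>
    intro V H hn hV hH
    match V, H with
    | [], H => rw [shuffles_nil_left]; simp
    | v :: V, [] => rw [shuffles_nil_right]; simp
    | v :: V, h :: H =>
      rw [shuffles_cons_cons]
      have nd1 : ((shuffles V (h :: H)).map (v :: ·)).Nodup :=
        (ih (V.length + (h :: H).length) (by simp at hn ⊢; omega) V (h :: H) rfl
          (fun s hs => hV s (List.mem_cons_of_mem _ hs)) hH).map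
          (fun a b hab => by injection hab)
      have nd2 : ((shuffles (v :: V) H).map (h :: ·)).Nodup :=
        (ih ((v :: V).length + H.length) (by simp at hn ⊢; omega) (v :: V) H rfl
          hV (fun s hs => hH s (List.mem_cons_of_mem _ hs))).map
          (fun a b hab => by injection hab)
      refine nd1.append nd2 ?_
      intro σ hσ1 hσ2
      obtain ⟨τ1, _, rfl⟩ := List.mem_map.mp hσ1
      obtain ⟨τ2, _, heq⟩ := List.mem_map.mp hσ2
      have : h = v := by injection heq
      have hv := hV v (List.mem_cons_self)
      have hh := hH h (List.mem_cons_self)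
      rw [this] at hh
      rw [vert_not_horiz hv] at hh
      exact Bool.noConfusion hh
/-! ### Peak counts and signed sums -/

def epsn : Step → Step → ℕ
  | N, W => 1
  | E, S => 1
  | _, _ => 0

lemma pairs_cons_cons (x y : Step) (σ : List Step) :
    pairs (x :: y :: σ) = (x, y) :: pairs (y :: σ) := rfl

lemma pc_cons_cons (x y : Step) (σ : List Step) :
    peakCount (x :: y :: σ) = epsn x y + peakCount (y :: σ) := by
  cases x <;> cases y <;>
    simp [peakCount, pairs_cons_cons, List.filter_cons, epsn] <;> omega

lemma pc_singleton (x : Step) : peakCount [x] = 0 := rfl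

lemma pc_nil : peakCount [] = 0 := rfl

lemma epsn_vert_right {v : Step} (x : Step) (hv : isVert v = true) (hx : x ≠ E) :
    epsn x v = 0 := by
  rcases vert_cases hv with rfl | rfl <;> cases x <;> simp_all [epsn]

lemma epsn_S (y : Step) : epsn S y = 0 := by cases y <;> rfl

lemma epsn_W (y : Step) : epsn W y = 0 := by cases y <;> rfl

lemma pc_horiz {H : List Step} (hH : ∀ s ∈ H, isHoriz s = true) : peakCount H = 0 := by
  have h1 : (pairs H).filter (fun p => decide (p.1 = N ∧ p.2 = W)) = [] := by
    rw [List.filter_eq_nil_iff]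
    rintro ⟨x, y⟩ hp
    have hx : x ∈ H := (List.of_mem_zip hp).1
    simp only [decide_eq_true_eq, not_and]
    rintro rfl
    have := hH N hx
    simp [isHoriz] at this
  have h2 : (pairs H).filter (fun p => decide (p.1 = E ∧ p.2 = S)) = [] := by
    rw [List.filter_eq_nil_iff]
    rintro ⟨x, y⟩ hp
    have hy : y ∈ H := List.mem_of_mem_tail (List.of_mem_zip hp).2
    simp only [decide_eq_true_eq, not_and]
    rintro _ rfl
    have := hH S hy
    simp [isHoriz] at this
  simp only [peakCount, h1, h2, List.length_nil]

lemma pc_vert {V : List Step} (hV : ∀ s ∈ V, isVert s = true) : peakCount V = 0 := by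
  have h1 : (pairs V).filter (fun p => decide (p.1 = N ∧ p.2 = W)) = [] := by
    rw [List.filter_eq_nil_iff]
    rintro ⟨x, y⟩ hp
    have hy : y ∈ V := List.mem_of_mem_tail (List.of_mem_zip hp).2
    simp only [decide_eq_true_eq, not_and]
    rintro _ rfl
    have := hV W hy
    simp [isVert] at this
  have h2 : (pairs V).filter (fun p => decide (p.1 = E ∧ p.2 = S)) = [] := by
    rw [List.filter_eq_nil_iff]
    rintro ⟨x, y⟩ hp
    have hx : x ∈ V := (List.of_mem_zip hp).1
    simp only [decide_eq_true_eq, not_and]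
    rintro rfl
    have := hV E hx
    simp [isVert] at this
  simp only [peakCount, h1, h2, List.length_nil]

/-- Optionally prepend a step. -/
def consO : Option Step → List Step → List Step
  | none, σ => σ
  | some x, σ => x :: σ

def epso : Option Step → Step → ℕ
  | none, _ => 0
  | some x, y => epsn x y

/-- Sign weight of a shuffle in context `o`. -/
def wt (o : Option Step) (σ : List Step) : ℤ := (-1) ^ peakCount (consO o σ)

lemma wt_cons (o : Option Step) (y : Step) (σ : List Step) :
    wt o (y :: σ) = (-1) ^ (epso o y) * wt (some y) σ := by
  cases o with
  | none => simp [wt, consO, epso]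
  | some x => simp [wt, consO, epso, pc_cons_cons x y σ, pow_add]

/-- Signed sum over all shuffles, with an optional preceding step. -/
def SSo (o : Option Step) (V H : List Step) : ℤ :=
  ((shuffles V H).map (wt o)).sum

lemma SSo_nil_left (o : Option Step) (H : List Step) : SSo o [] H = wt o H := by
  simp [SSo, shuffles_nil_left]

lemma SSo_nil_right (o : Option Step) (V : List Step) : SSo o V [] = wt o V := by
  simp [SSo, shuffles_nil_right]

lemma SSo_rec (o : Option Step) (v h : Step) (V H : List Step) :
    SSo o (v :: V) (h :: H)
      = (-1) ^ (epso o v) * SSo (some v) V (h :: H)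
        + (-1) ^ (epso o h) * SSo (some h) (v :: V) H := by
  unfold SSo
  rw [shuffles_cons_cons, List.map_append, List.sum_append, List.map_map, List.map_map]
  congr 1
  · rw [show wt o ∘ (v :: ·) = fun σ => (-1) ^ (epso o v) * wt (some v) σ from
      funext fun σ => wt_cons o v σ, List.sum_map_mul_left]
  · rw [show wt o ∘ (h :: ·) = fun σ => (-1) ^ (epso o h) * wt (some h) σ from
      funext fun σ => wt_cons o h σ, List.sum_map_mul_left]

lemma wt_eq_of_epso_zero {o : Option Step} (ho : ∀ y, epso o y = 0) (σ : List Step) :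
    wt o σ = wt none σ := by
  cases σ with
  | nil => cases o with
    | none => rfl
    | some x => simp [wt, consO, pc_singleton, pc_nil]
  | cons y τ => rw [wt_cons, ho y, pow_zero, one_mul]; rfl

lemma SSo_S (V H : List Step) : SSo (some S) V H = SSo none V H := by
  unfold SSo
  congr 1
  exact List.map_congr_left fun σ _ => wt_eq_of_epso_zero (o := some S) (fun y => epsn_S y) σ

lemma SSo_W (V H : List Step) : SSo (some W) V H = SSo none V H := by
  unfold SSo
  congr 1
  exact List.map_congr_left fun σ _ => wt_eq_of_epso_zero (o := some W) (fun y => epsn_W y) σ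

lemma SSo_N_nil (V : List Step) (hV : ∀ s ∈ V, isVert s = true) :
    SSo (some N) V [] = SSo none V [] := by
  rw [SSo_nil_right, SSo_nil_right]
  cases V with
  | nil => simp [wt, consO, pc_singleton, pc_nil]
  | cons v V₂ =>
    rw [wt_cons, wt_cons]
    have : epsn N v = 0 :=
      epsn_vert_right N (hV v (List.mem_cons_self)) (by simp)
    simp [epso, this]

lemma SSo_N_E (V H₂ : List Step) (hV : ∀ s ∈ V, isVert s = true) :
    SSo (some N) V (E :: H₂) = SSo none V (E :: H₂) := by
  cases V with
  | nil =>
    rw [SSo_nil_left, SSo_nil_left, wt_cons, wt_cons]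
    simp [epso, show epsn N E = 0 from rfl]
  | cons v V₂ =>
    rw [SSo_rec, SSo_rec]
    have : epsn N v = 0 :=
      epsn_vert_right N (hV v (List.mem_cons_self)) (by simp)
    simp [epso, this, show epsn N E = 0 from rfl]

lemma SSo_N_W (V H₂ : List Step) (hV : ∀ s ∈ V, isVert s = true)
    (hH₂ : ∀ s ∈ H₂, isHoriz s = true) :
    SSo (some N) V (W :: H₂) = SSo none V (W :: H₂) - 2 * SSo none V H₂ := by
  have hWH : ∀ s ∈ (W :: H₂), isHoriz s = true := by
    intro s hs
    rcases List.mem_cons.mp hs with rfl | hs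
    · rfl
    · exact hH₂ s hs
  cases V with
  | nil =>
    rw [SSo_nil_left, SSo_nil_left, SSo_nil_left]
    have e1 : wt none (W :: H₂) = 1 := by simp [wt, consO, pc_horiz hWH]
    have e2 : wt none H₂ = 1 := by simp [wt, consO, pc_horiz hH₂]
    have e3 : wt (some N) (W :: H₂) = -1 := by
      rw [wt_cons]
      have : wt (some W) H₂ = wt none H₂ :=
        wt_eq_of_epso_zero (o := some W) (fun y => epsn_W y) H₂
      simp [epso, show epsn N W = 1 from rfl, this, e2]
    rw [e1, e2, e3]; ring
  | cons v V₂ =>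
    rw [SSo_rec, SSo_rec, SSo_W]
    have : epsn N v = 0 :=
      epsn_vert_right N (hV v (List.mem_cons_self)) (by simp)
    simp [epso, this, show epsn N W = 1 from rfl]
    ring

lemma SSo_E_N (V₂ H : List Step) (hH : ∀ s ∈ H, isHoriz s = true) :
    SSo (some E) (N :: V₂) H = SSo none (N :: V₂) H := by
  cases H with
  | nil =>
    rw [SSo_nil_right, SSo_nil_right, wt_cons, wt_cons]
    simp [epso, show epsn E N = 0 from rfl]
  | cons h H₂ =>
    rw [SSo_rec, SSo_rec]
    have : epsn E h = 0 := by
      rcases horiz_cases (hH h (List.mem_cons_self)) with rfl | rfl <;> rfl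
    simp [epso, this, show epsn E N = 0 from rfl]

lemma SSo_E_S (V₂ H : List Step) (hV₂ : ∀ s ∈ V₂, isVert s = true)
    (hH : ∀ s ∈ H, isHoriz s = true) :
    SSo (some E) (S :: V₂) H = SSo none (S :: V₂) H - 2 * SSo none V₂ H := by
  have hSV : ∀ s ∈ (S :: V₂), isVert s = true := by
    intro s hs
    rcases List.mem_cons.mp hs with rfl | hs
    · rfl
    · exact hV₂ s hs
  cases H with
  | nil =>
    rw [SSo_nil_right, SSo_nil_right, SSo_nil_right]
    have e1 : wt none (S :: V₂) = 1 := by simp [wt, consO, pc_vert hSV]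
    have e2 : wt none V₂ = 1 := by simp [wt, consO, pc_vert hV₂]
    have e3 : wt (some E) (S :: V₂) = -1 := by
      rw [wt_cons]
      have : wt (some S) V₂ = wt none V₂ :=
        wt_eq_of_epso_zero (o := some S) (fun y => epsn_S y) V₂
      simp [epso, show epsn E S = 1 from rfl, this, e2]
    rw [e1, e2, e3]; ring
  | cons h H₂ =>
    rw [SSo_rec, SSo_rec, SSo_S]
    have : epsn E h = 0 := by
      rcases horiz_cases (hH h (List.mem_cons_self)) with rfl | rfl <;> rfl
    simp [epso, this, show epsn E S = 1 from rfl]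
    ring

lemma master : ∀ (n : ℕ) (V H : List Step), V.length + H.length = n →
    (∀ s ∈ V, isVert s = true) → (∀ s ∈ H, isHoriz s = true) →
    SSo none V H = g (V.count N) (V.count S) (H.count E) (H.count W) := by
  intro n
  induction n using Nat.strong_induction_on with
  | _ n ih =>
  intro V H hn hV hH
  match V, H with
  | [], H =>
    rw [SSo_nil_left, show wt none H = 1 by simp [wt, consO, pc_horiz hH]]
    simp only [List.count_nil]
    exact (g5 _ _).symm
  | v :: V₂, [] =>
    rw [SSo_nil_right, show wt none (v :: V₂) = 1 by simp [wt, consO, pc_vert hV]]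
    simp only [List.count_nil]
    exact (g6 _ _).symm
  | v :: V₂, h :: H₂ =>
    have hV₂ : ∀ s ∈ V₂, isVert s = true := fun s hs => hV s (List.mem_cons_of_mem _ hs)
    have hH₂ : ∀ s ∈ H₂, isHoriz s = true := fun s hs => hH s (List.mem_cons_of_mem _ hs)
    have hv := hV v (List.mem_cons_self)
    have hh := hH h (List.mem_cons_self)
    have hlen : V₂.length + (h :: H₂).length < n := by
      simp only [List.length_cons] at hn ⊢; omega
    have hlen2 : (v :: V₂).length + H₂.length < n := by
      simp only [List.length_cons] at hn ⊢; omega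
    have hlen3 : V₂.length + H₂.length < n := by
      simp only [List.length_cons] at hn ⊢; omega
    have ih1 := ih _ hlen V₂ (h :: H₂) rfl hV₂ hH
    have ih2 := ih _ hlen2 (v :: V₂) H₂ rfl hV hH₂
    have ih3 := ih _ hlen3 V₂ H₂ rfl hV₂ hH₂
    rw [SSo_rec none v h V₂ H₂]
    simp only [epso, pow_zero, one_mul]
    rcases vert_cases hv with rfl | rfl <;> rcases horiz_cases hh with rfl | rfl
    · -- v = N, h = E
      rw [SSo_N_E V₂ H₂ hV₂, SSo_E_N V₂ H₂ hH₂, ih1, ih2]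
      simp only [List.count_cons_self, List.count_cons_of_ne (by decide : Step.E ≠ Step.N),
        List.count_cons_of_ne (by decide : Step.E ≠ Step.S),
        List.count_cons_of_ne (by decide : Step.E ≠ Step.W),
        List.count_cons_of_ne (by decide : Step.N ≠ Step.E),
        List.count_cons_of_ne (by decide : Step.N ≠ Step.S),
        List.count_cons_of_ne (by decide : Step.N ≠ Step.W)]
      linarith [g1 (V₂.count N) (V₂.count S) (H₂.count E) (H₂.count W)]
    · -- v = N, h = W
      rw [SSo_N_W V₂ H₂ hV₂ hH₂, SSo_W, ih1, ih2, ih3]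
      simp only [List.count_cons_self, List.count_cons_of_ne (by decide : Step.W ≠ Step.E),
        List.count_cons_of_ne (by decide : Step.W ≠ Step.N),
        List.count_cons_of_ne (by decide : Step.W ≠ Step.S),
        List.count_cons_of_ne (by decide : Step.N ≠ Step.E),
        List.count_cons_of_ne (by decide : Step.N ≠ Step.S),
        List.count_cons_of_ne (by decide : Step.N ≠ Step.W)]
      linarith [g2 (V₂.count N) (V₂.count S) (H₂.count E) (H₂.count W)]
    · -- v = S, h = E
      rw [SSo_S, SSo_E_S V₂ H₂ hV₂ hH₂, ih1, ih2, ih3]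
      simp only [List.count_cons_self, List.count_cons_of_ne (by decide : Step.E ≠ Step.N),
        List.count_cons_of_ne (by decide : Step.E ≠ Step.S),
        List.count_cons_of_ne (by decide : Step.E ≠ Step.W),
        List.count_cons_of_ne (by decide : Step.S ≠ Step.N),
        List.count_cons_of_ne (by decide : Step.S ≠ Step.E),
        List.count_cons_of_ne (by decide : Step.S ≠ Step.W)]
      linarith [g3 (V₂.count N) (V₂.count S) (H₂.count E) (H₂.count W)]
    · -- v = S, h = W
      rw [SSo_S, SSo_W, ih1, ih2]
      simp only [List.count_cons_self, List.count_cons_of_ne (by decide : Step.W ≠ Step.E),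
        List.count_cons_of_ne (by decide : Step.W ≠ Step.N),
        List.count_cons_of_ne (by decide : Step.W ≠ Step.S),
        List.count_cons_of_ne (by decide : Step.S ≠ Step.N),
        List.count_cons_of_ne (by decide : Step.S ≠ Step.E),
        List.count_cons_of_ne (by decide : Step.S ≠ Step.W)]
      linarith [g4 (V₂.count N) (V₂.count S) (H₂.count E) (H₂.count W)]
lemma count_split (L : List (List Step)) :
    ((L.map (fun σ => ((-1 : ℤ)) ^ peakCount σ)).sum)
      = ((L.filter (fun σ => decide (Even (peakCount σ)))).length : ℤ)
        - ((L.filter (fun σ => decide (¬ Even (peakCount σ)))).length : ℤ) := by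
  induction L with
  | nil => simp
  | cons σ L ihl =>
    simp only [List.map_cons, List.sum_cons, List.filter_cons]
    by_cases h : Even (peakCount σ)
    · rw [if_pos (by simpa using h), if_neg (by simpa using h), h.neg_one_pow]
      simp only [List.length_cons]
      push_cast
      rw [ihl]; ring
    · rw [if_neg (by simpa using h), if_pos (by simpa using h),
        (Nat.not_even_iff_odd.mp h).neg_one_pow]
      simp only [List.length_cons]
      push_cast
      rw [ihl]; ring

/-- **Theorem (super Catalan numbers).**
If `V` has `r` North and `l` South steps and `H` has `r` East and `l` West steps, then the
number of shuffles of `V` and `H` with even peak-count minus the number with odd peak-count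
equals the super Catalan number `S(r, l) = (2r)!·(2l)! / (r!·l!·(r+l)!)`. -/
theorem even_sub_odd_peakCount_superCatalan (r l : ℕ) (V H : List Step)
    (hV : ∀ s ∈ V, isVert s = true)
    (hVu : V.count Step.N = r) (hVd : V.count Step.S = l)
    (hH : ∀ s ∈ H, isHoriz s = true)
    (hHr : H.count Step.E = r) (hHl : H.count Step.W = l) :
    ({σ : List Step | IsShuffle V H σ ∧ Even (peakCount σ)}.ncard : ℚ)
      - ({σ : List Step | IsShuffle V H σ ∧ ¬ Even (peakCount σ)}.ncard : ℚ)
      = ((2 * r).factorial * (2 * l).factorial : ℚ)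
          / (r.factorial * l.factorial * (r + l).factorial : ℚ) := by
  classical
  have hnd : (shuffles V H).Nodup := shuffles_nodup (V.length + H.length) V H rfl hV hH
  have hmem : ∀ σ, σ ∈ shuffles V H ↔ IsShuffle V H σ := fun σ => mem_shuffles_iff hV hH
  have hset1 : {σ : List Step | IsShuffle V H σ ∧ Even (peakCount σ)}
      = ↑(((shuffles V H).filter (fun σ => decide (Even (peakCount σ)))).toFinset) := by
    ext σ
    simp [List.mem_filter, hmem σ]
  have hset2 : {σ : List Step | IsShuffle V H σ ∧ ¬ Even (peakCount σ)}
      = ↑(((shuffles V H).filter (fun σ => decide (¬ Even (peakCount σ)))).toFinset) := by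
    ext σ
    simp [List.mem_filter, hmem σ]
  rw [hset1, hset2, Set.ncard_coe_finset, Set.ncard_coe_finset,
    List.toFinset_card_of_nodup (hnd.filter _), List.toFinset_card_of_nodup (hnd.filter _)]
  have hkey : (((shuffles V H).filter (fun σ => decide (Even (peakCount σ)))).length : ℤ)
      - (((shuffles V H).filter (fun σ => decide (¬ Even (peakCount σ)))).length : ℤ)
      = SSo none V H := by
    unfold SSo
    rw [show (wt none) = fun σ => ((-1 : ℤ)) ^ peakCount σ from funext fun σ => rfl]
    exact (count_split (shuffles V H)).symm
  have hg := master (V.length + H.length) V H rfl hV hH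
  rw [hVu, hVd, hHr, hHl] at hg
  have hQ : (((shuffles V H).filter (fun σ => decide (Even (peakCount σ)))).length : ℚ)
      - (((shuffles V H).filter (fun σ => decide (¬ Even (peakCount σ)))).length : ℚ)
      = ((g r l r l : ℤ) : ℚ) := by
    rw [← hg, ← hkey]
    push_cast
    ring
  rw [hQ, g_rat l r]
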